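/- arXiv:2406.02669 — 2 statements merged into one kernel-verified Lean document; each statement's English description precedes it below -/
import Mathlib

section
/- Fourier filtering of measurement outcomes for one mid-circuit measurement: let n, m ∈ ℕ, let p : Z2^n × Z2^n × V_m → ℝ with Pauli fidelities λ(x,y,Q) := Σ_{a,b,P} (-1)^{a·x + b·y + ⟨P,Q⟩} p(a,b,P), and let U_k(ρ) := Σ_{a,b ∈ Z2^n, P ∈ V_m} p(a,b,P) · (W(P) ⊗ E_{k+b,k+a}) ρ (W(P) ⊗ E_{k+b,k+a})† be the associated uniform stochastic instrument. Then for all x₀, y₀ ∈ Z2^n, Q₀ ∈ V_m, and every complex matrix ρ on the (m+n)-qubit space: Σ_{k ∈ Z2^n} (-1)^{k·(x₀+y₀)} · Tr((W(Q₀) ⊗ Z^{y₀}) · U_k(ρ)) = λ(x₀,y₀,Q₀) · Tr((W(Q₀) ⊗ Z^{x₀}) · ρ). -/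
open Finset Matrix Kronecker

/-- `m`-qubit Pauli operators modulo phase, as pairs of X- and Z-exponents per qubit. -/
abbrev V (m : ℕ) := Fin m → ZMod 2 × ZMod 2

/-- Symplectic inner product recording (non-)commutation of Pauli operators. -/
def sympl {m : ℕ} (P Q : V m) : ZMod 2 :=
  ∑ i, ((P i).1 * (Q i).2 + (P i).2 * (Q i).1)

/-- Dot product on `Z2^n`. -/
def dot {n : ℕ} (x y : Fin n → ZMod 2) : ZMod 2 := ∑ i, x i * y i

/-- The real sign `(-1)^z` associated with `z : ZMod 2`. -/
def sgn (z : ZMod 2) : ℝ := (-1 : ℝ) ^ z.val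

/-- The Hermitian Pauli matrix labeled by `v : V n`. -/
noncomputable def W {n : ℕ} (v : V n) :
    Matrix (Fin n → ZMod 2) (Fin n → ZMod 2) ℂ := fun j k =>
  Complex.I ^ (Finset.univ.filter (fun i => (v i).1 = 1 ∧ (v i).2 = 1)).card *
    (-1 : ℂ) ^ (∑ i, (v i).2 * k i : ZMod 2).val *
    (if j = (fun i => k i + (v i).1) then 1 else 0)

/-- `Z^x`: the purely-Z Pauli matrix with Z-exponents `x`. -/
noncomputable def Zpow {n : ℕ} (x : Fin n → ZMod 2) :
    Matrix (Fin n → ZMod 2) (Fin n → ZMod 2) ℂ :=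
  W (fun i => ((0 : ZMod 2), x i))

/-- Matrices on the `(m+n)`-qubit space. -/
abbrev MatP (m n : ℕ) :=
  Matrix ((Fin m → ZMod 2) × (Fin n → ZMod 2)) ((Fin m → ZMod 2) × (Fin n → ZMod 2)) ℂ

/-- The uniform stochastic instrument with Pauli error rates `p`:
`U_k(ρ) = Σ_{a,b,P} p(a,b,P) (W(P) ⊗ E_{k+b,k+a}) ρ (W(P) ⊗ E_{k+b,k+a})†`. -/
noncomputable def instU (n m : ℕ)
    (p : (Fin n → ZMod 2) × (Fin n → ZMod 2) × V m → ℝ)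
    (k : Fin n → ZMod 2) (ρ : MatP m n) : MatP m n :=
  ∑ a : Fin n → ZMod 2, ∑ b : Fin n → ZMod 2, ∑ P : V m,
    (p (a, b, P) : ℂ) •
      ((W P ⊗ₖ Matrix.single (k + b) (k + a) (1 : ℂ)) * ρ *
        (W P ⊗ₖ Matrix.single (k + b) (k + a) (1 : ℂ))ᴴ)

noncomputable def χ (z : ZMod 2) : ℂ := (-1 : ℂ) ^ z.val

lemma χ_add (u v : ZMod 2) : χ (u + v) = χ u * χ v := by
  rw [χ, χ, χ, ZMod.val_add, ← pow_add, ← neg_one_pow_eq_pow_mod_two]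

lemma χ_mul_self (u : ZMod 2) : χ u * χ u = 1 := by
  rw [χ, ← pow_add, ← two_mul, pow_mul]; norm_num

lemma sgn_cast (z : ZMod 2) : ((sgn z : ℝ) : ℂ) = χ z := by
  simp [sgn, χ]

lemma add_self_fun {n : ℕ} (w a : Fin n → ZMod 2) : w + a + a = w := by
  funext i
  have : ∀ z : ZMod 2, z + z = 0 := by decide
  simp [add_assoc, this (a i)]

lemma dot_add_right {n : ℕ} (k x y : Fin n → ZMod 2) :
    dot k (x + y) = dot k x + dot k y := by
  simp [dot, mul_add, Finset.sum_add_distrib]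

lemma dot_add_left {n : ℕ} (k a x : Fin n → ZMod 2) :
    dot (k + a) x = dot k x + dot a x := by
  simp [dot, add_mul, Finset.sum_add_distrib]

lemma dot_comm {n : ℕ} (x y : Fin n → ZMod 2) : dot x y = dot y x := by
  simp [dot, mul_comm]

lemma Zpow_diag {n : ℕ} (x : Fin n → ZMod 2) :
    Zpow x = Matrix.diagonal (fun v => χ (dot x v)) := by
  ext j k
  by_cases h : j = k <;>
    simp [Zpow, W, Matrix.diagonal, χ, dot, h, eq_comm]

lemma main_alg (u v w b c d e : ℂ) (h1 : u * v = 1) (h2 : b * b = 1) :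
    u * (b * c) * (w * (d * e)) * (v * b) = e * c * (w * d) := by
  linear_combination (c*w*d*e*u*v) * h2 + (c*w*d*e) * h1

lemma W_conj_mul {μ : ℕ} (P Q : V μ) :
    (W P)ᴴ * W Q * W P = χ (sympl P Q) • W Q := by
  ext j k
  simp only [Matrix.mul_apply, Matrix.conjTranspose_apply, W, Matrix.smul_apply, smul_eq_mul,
    mul_ite, mul_one, mul_zero, ite_mul, zero_mul, _root_.map_mul, map_pow,
    apply_ite (starRingEnd ℂ), map_zero, Complex.star_def, Complex.conj_I, map_neg,
    _root_.map_one, Finset.sum_ite_eq, Finset.sum_ite_eq', Finset.mem_univ, if_true]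
  have hcond : ((fun i => k i + (P i).1 + (Q i).1) = fun i => j i + (P i).1)
      ↔ (j = fun i => k i + (Q i).1) := by
    constructor <;> intro h <;> funext i <;> have h' := congrFun h i <;>
      linear_combination -h'
  rw [if_congr hcond rfl rfl]
  by_cases hc : j = fun i => k i + (Q i).1
  · subst hc
    simp only [if_true]
    have hsplit1 : (∑ x : Fin μ, (P x).2 * (k x + (Q x).1))
        = (∑ i, (P i).2 * k i) + ∑ i, (P i).2 * (Q i).1 := by
      simp [mul_add, Finset.sum_add_distrib]
    have hsplit2 : (∑ x : Fin μ, (Q x).2 * (k x + (P x).1))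
        = (∑ i, (Q i).2 * k i) + ∑ i, (P i).1 * (Q i).2 := by
      simp [mul_add, Finset.sum_add_distrib, mul_comm]
    have hsympl : sympl P Q = (∑ i, (P i).1 * (Q i).2) + ∑ i, (P i).2 * (Q i).1 := by
      simp [sympl, Finset.sum_add_distrib]
    rw [hsplit1, hsplit2, hsympl]
    simp only [show ∀ z : ZMod 2, ((-1:ℂ))^z.val = χ z from fun _ => rfl, χ_add]
    have hIs : (-Complex.I) ^ #(Finset.filter (fun i => (P i).1 = 1 ∧ (P i).2 = 1) Finset.univ)
        * Complex.I ^ #(Finset.filter (fun i => (P i).1 = 1 ∧ (P i).2 = 1) Finset.univ) = 1 := by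
      rw [← mul_pow]
      simp [Complex.I_mul_I]
    exact main_alg _ _ _ _ _ _ _ hIs (χ_mul_self _)
  · rw [if_neg hc, if_neg hc]

lemma kron_conjT {I J : Type*} [Fintype I] [Fintype J] [DecidableEq I] [DecidableEq J]
    (A : Matrix I I ℂ) (B : Matrix J J ℂ) : (A ⊗ₖ B)ᴴ = Aᴴ ⊗ₖ Bᴴ := by
  ext ⟨i1, i2⟩ ⟨j1, j2⟩
  simp [Matrix.conjTranspose_apply, Matrix.kroneckerMap_apply, star_mul', mul_comm]

lemma EdE {n : ℕ} (u v : Fin n → ZMod 2) (d : (Fin n → ZMod 2) → ℂ) :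
    Matrix.single v u (1 : ℂ) * Matrix.diagonal d * Matrix.single u v 1
      = d u • Matrix.single v v 1 := by
  ext i j
  simp only [Matrix.mul_apply, Matrix.single, Matrix.diagonal, Matrix.of_apply,
    Matrix.smul_apply, smul_eq_mul, ite_and, ite_mul, mul_ite, zero_mul, mul_zero, one_mul,
    mul_one, Finset.sum_ite_eq, Finset.sum_ite_eq', Finset.mem_univ, if_true]
  by_cases h1 : v = i <;> by_cases h2 : v = j <;> simp [h1, h2]

lemma E_conjT {n : ℕ} (u v : Fin n → ZMod 2) :
    (Matrix.single u v (1 : ℂ))ᴴ = Matrix.single v u 1 := by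
  ext i j
  simp [Matrix.conjTranspose_apply, Matrix.single, and_comm]

lemma diag_eq_sum {n : ℕ} (d : (Fin n → ZMod 2) → ℂ) :
    Matrix.diagonal d = ∑ v, d v • Matrix.single v v (1 : ℂ) := by
  ext i j
  by_cases h : i = j <;>
    simp [Matrix.sum_apply, Matrix.diagonal, Matrix.single, h, ite_and,
      Finset.sum_ite_eq, Finset.sum_ite_eq']

lemma kron_sum_right {I J K : Type*} [Fintype K] (A : Matrix I I ℂ) (s : Finset K)
    (f : K → Matrix J J ℂ) : A ⊗ₖ (∑ v ∈ s, f v) = ∑ v ∈ s, A ⊗ₖ f v := by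
  ext ⟨i1, i2⟩ ⟨j1, j2⟩
  simp [Matrix.kroneckerMap_apply, Matrix.sum_apply, Finset.mul_sum]

lemma trace_kron_diag {m n : ℕ} (A : Matrix (Fin m → ZMod 2) (Fin m → ZMod 2) ℂ)
    (d : (Fin n → ZMod 2) → ℂ) (ρ : Matrix ((Fin m → ZMod 2) × (Fin n → ZMod 2)) ((Fin m → ZMod 2) × (Fin n → ZMod 2)) ℂ) :
    ((A ⊗ₖ Matrix.diagonal d) * ρ).trace
      = ∑ v, d v * ((A ⊗ₖ Matrix.single v v (1 : ℂ)) * ρ).trace := by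
  rw [diag_eq_sum, kron_sum_right, Finset.sum_mul, Matrix.trace_sum]
  refine Finset.sum_congr rfl fun v _ => ?_
  rw [Matrix.kronecker_smul, Matrix.smul_mul, Matrix.trace_smul, smul_eq_mul]

lemma trace_conj_cycle {I : Type*} [Fintype I] (M X ρ : Matrix I I ℂ) :
    (M * (X * ρ * Xᴴ)).trace = ((Xᴴ * M * X) * ρ).trace := by
  rw [← Matrix.mul_assoc, Matrix.trace_mul_comm, ← Matrix.mul_assoc, ← Matrix.mul_assoc]

lemma key_trace {m n : ℕ} (Q₀ : V m) (y₀ : Fin n → ZMod 2) (ρ : MatP m n)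
    (k a b : Fin n → ZMod 2) (P : V m) :
    ((W Q₀ ⊗ₖ Zpow y₀) * ((W P ⊗ₖ Matrix.single (k + b) (k + a) (1 : ℂ)) * ρ *
        (W P ⊗ₖ Matrix.single (k + b) (k + a) (1 : ℂ))ᴴ)).trace
    = χ (sympl P Q₀) * (χ (dot y₀ (k + b)) *
        ((W Q₀ ⊗ₖ Matrix.single (k + a) (k + a) (1 : ℂ)) * ρ).trace) := by
  rw [trace_conj_cycle]
  have h2 : (W P ⊗ₖ Matrix.single (k + b) (k + a) (1 : ℂ))ᴴ *
        (W Q₀ ⊗ₖ Zpow y₀) * (W P ⊗ₖ Matrix.single (k + b) (k + a) (1 : ℂ))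
      = (χ (sympl P Q₀) * χ (dot y₀ (k + b))) •
        (W Q₀ ⊗ₖ Matrix.single (k + a) (k + a) (1 : ℂ)) := by
    rw [kron_conjT, E_conjT, Zpow_diag, ← Matrix.mul_kronecker_mul, ← Matrix.mul_kronecker_mul,
      W_conj_mul, EdE, Matrix.smul_kronecker, Matrix.kronecker_smul, smul_smul]
  rw [h2, Matrix.smul_mul, Matrix.trace_smul, smul_eq_mul, mul_assoc]

lemma ksum {n : ℕ} (t : (Fin n → ZMod 2) → ℂ) (x₀ y₀ a b : Fin n → ZMod 2) :
    ∑ k, χ (dot k (x₀ + y₀)) * (χ (dot y₀ (k + b)) * t (k + a))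
      = χ (dot a x₀) * χ (dot b y₀) * ∑ v, χ (dot x₀ v) * t v := by
  have step1 : ∀ k, χ (dot k (x₀ + y₀)) * (χ (dot y₀ (k + b)) * t (k + a))
      = χ (dot b y₀) * (χ (dot k x₀) * t (k + a)) := by
    intro k
    rw [dot_add_right, χ_add, dot_add_right, χ_add, dot_comm y₀ k, dot_comm y₀ b]
    linear_combination (χ (dot k x₀) * χ (dot b y₀) * t (k + a)) * χ_mul_self (dot k y₀)
  rw [Finset.sum_congr rfl fun k _ => step1 k, ← Finset.mul_sum]
  have step2 : ∑ k, χ (dot k x₀) * t (k + a) = χ (dot a x₀) * ∑ v, χ (dot x₀ v) * t v := by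
    rw [Finset.mul_sum]
    refine Fintype.sum_equiv (Equiv.addRight a) _ _ fun k => ?_
    show χ (dot k x₀) * t (k + a) = χ (dot a x₀) * (χ (dot x₀ (k + a)) * t (k + a))
    rw [dot_comm x₀ (k + a), dot_add_left, χ_add]
    linear_combination -(χ (dot k x₀) * t (k + a)) * χ_mul_self (dot a x₀)
  rw [step2]; ring

/-- Fourier filtering of measurement outcomes for one mid-circuit measurement:
`Σ_k (-1)^{k·(x₀+y₀)} Tr((W(Q₀) ⊗ Z^{y₀}) U_k(ρ)) = λ(x₀,y₀,Q₀) Tr((W(Q₀) ⊗ Z^{x₀}) ρ)`. -/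
theorem stmt_3 (n m : ℕ)
    (p : (Fin n → ZMod 2) × (Fin n → ZMod 2) × V m → ℝ)
    (lam : (Fin n → ZMod 2) → (Fin n → ZMod 2) → V m → ℝ)
    (hlam : ∀ (x y : Fin n → ZMod 2) (Q : V m),
      lam x y Q = ∑ a : Fin n → ZMod 2, ∑ b : Fin n → ZMod 2, ∑ P : V m,
        sgn (dot a x + dot b y + sympl P Q) * p (a, b, P))
    (x₀ y₀ : Fin n → ZMod 2) (Q₀ : V m) (ρ : MatP m n) :
    ∑ k : Fin n → ZMod 2,
      ((sgn (dot k (x₀ + y₀)) : ℂ) *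
        ((W Q₀ ⊗ₖ Zpow y₀) * instU n m p k ρ).trace)
    = (lam x₀ y₀ Q₀ : ℂ) * ((W Q₀ ⊗ₖ Zpow x₀) * ρ).trace := by
  classical
  simp only [instU, Matrix.mul_sum, Matrix.mul_smul, Matrix.trace_sum, Matrix.trace_smul,
    smul_eq_mul, key_trace, sgn_cast]
  rw [hlam, Zpow_diag x₀, trace_kron_diag]
  push_cast
  simp only [sgn_cast]
  simp only [Finset.sum_mul, Finset.mul_sum]
  conv_lhs => rw [Finset.sum_comm]
  conv_lhs => enter [2, a]; rw [Finset.sum_comm]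
  conv_lhs => enter [2, a, 2, b]; rw [Finset.sum_comm]
  conv_rhs => rw [Finset.sum_comm]
  conv_rhs => enter [2, a]; rw [Finset.sum_comm]
  conv_rhs => enter [2, a, 2, b]; rw [Finset.sum_comm]
  refine Finset.sum_congr rfl fun a _ => Finset.sum_congr rfl fun b _ =>
    Finset.sum_congr rfl fun P _ => ?_
  calc (∑ k, χ (dot k (x₀ + y₀)) * (↑(p (a, b, P)) * (χ (sympl P Q₀) *
          (χ (dot y₀ (k + b)) * ((W Q₀ ⊗ₖ Matrix.single (k + a) (k + a) (1:ℂ)) * ρ).trace))))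
      = ↑(p (a, b, P)) * χ (sympl P Q₀) * ∑ k, χ (dot k (x₀ + y₀)) *
          (χ (dot y₀ (k + b)) * ((W Q₀ ⊗ₖ Matrix.single (k + a) (k + a) (1:ℂ)) * ρ).trace) := by
        rw [Finset.mul_sum]; exact Finset.sum_congr rfl fun k _ => by ring
    _ = ↑(p (a, b, P)) * χ (sympl P Q₀) * (χ (dot a x₀) * χ (dot b y₀) *
          ∑ v, χ (dot x₀ v) * ((W Q₀ ⊗ₖ Matrix.single v v (1:ℂ)) * ρ).trace) := by
        rw [ksum (fun v => ((W Q₀ ⊗ₖ Matrix.single v v (1:ℂ)) * ρ).trace) x₀ y₀ a b]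
    _ = ∑ v, χ (dot a x₀ + dot b y₀ + sympl P Q₀) * ↑(p (a, b, P)) *
          (χ (dot x₀ v) * ((W Q₀ ⊗ₖ Matrix.single v v (1:ℂ)) * ρ).trace) := by
        rw [← Finset.mul_sum, χ_add, χ_add]; ring
end

section
/- Proposition 2 of the paper (syndrome measurements), stated as a cycle-space membership: let n, m ∈ ℕ and let s : Fin n → V_m be stabilizer labels with ⟨s_i, s_j⟩ = 0 for all i, j; write S(x) := Σ_{i : x_i = 1} s_i for x ∈ Z2^n. Let g : V_{m+n} → V_{m+n} be a map such that g(Q⊞x) = (Q + S(x))⊞x for every x ∈ Z2^n and every Q ∈ V_m with ⟨s_i, Q⟩ = 0 for all i. Let P ∈ V_m satisfy ⟨s_i, P⟩ = 0 for all i. Then in the free ℝ-module on Pauli weight patterns one has Σ_{x,y,k ∈ Z2^n} Σ_{Q ∈ V_m} (-1)^{⟨S(k) + P, Q⟩} · ([pt(Q⊞y)] − [pt(g(Q⊞x))]) = 0; i.e., the 1-chain Σ_{x,y,k,Q} (-1)^{⟨S(k)P, Q⟩} e^Q_{x,y} of the pattern transfer graph has zero boundary. -/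
open Finset

/-- Pauli weight pattern: `1` on qubits where the Pauli label is non-identity. -/
def pt {N : ℕ} (v : V N) : Fin N → ZMod 2 :=
  fun i => if v i = (0, 0) then 0 else 1

/-- `Q⊞x`: the `(m+n)`-qubit Pauli label of `Q ⊗ Z^x`. -/
def emb {m n : ℕ} (Q : V m) (x : Fin n → ZMod 2) : V (m + n) :=
  Fin.append Q (fun i => ((0 : ZMod 2), x i))

/-- `S(x) = Σ_{i : x_i = 1} s_i`: the label of the product of the stabilizers
selected by `x`. -/
def Sfun {n m : ℕ} (s : Fin n → V m) (x : Fin n → ZMod 2) : V m :=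
  ∑ i ∈ Finset.univ.filter (fun i => x i = 1), s i

lemma zmod2_cases (a : ZMod 2) : a = 0 ∨ a = 1 := by revert a; decide

lemma sgn_zero : sgn (0 : ZMod 2) = 1 := by
  have : (0 : ZMod 2).val = 0 := rfl
  simp [sgn, this]

lemma sgn_one : sgn (1 : ZMod 2) = -1 := by
  have : (1 : ZMod 2).val = 1 := rfl
  simp [sgn, this]

lemma sgn_add (a b : ZMod 2) : sgn (a + b) = sgn a * sgn b := by
  have h11 : (1 + 1 : ZMod 2) = 0 := by decide
  rcases zmod2_cases a with ha | ha <;> rcases zmod2_cases b with hb | hb <;>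
    subst ha <;> subst hb <;>
    simp [h11, sgn_zero, sgn_one]

lemma sympl_add_left {m : ℕ} (a b Q : V m) :
    sympl (a + b) Q = sympl a Q + sympl b Q := by
  unfold sympl
  rw [← Finset.sum_add_distrib]
  exact Finset.sum_congr rfl (fun i _ => by simp [Pi.add_apply]; ring)

lemma sympl_zero_left {m : ℕ} (Q : V m) : sympl (0 : V m) Q = 0 := by
  simp [sympl]

lemma sympl_comm {m : ℕ} (a b : V m) : sympl a b = sympl b a := by
  unfold sympl
  exact Finset.sum_congr rfl (fun i _ => by ring)

lemma sympl_sum_left {m : ℕ} {ι : Type*} (F : Finset ι) (f : ι → V m) (Q : V m) :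
    sympl (∑ i ∈ F, f i) Q = ∑ i ∈ F, sympl (f i) Q := by
  classical
  induction F using Finset.induction with
  | empty => simp [sympl_zero_left]
  | insert _ _ h ih =>
      rw [Finset.sum_insert h, Finset.sum_insert h, sympl_add_left, ih]

lemma sympl_Sfun {n m : ℕ} (s : Fin n → V m) (x : Fin n → ZMod 2) (Q : V m) :
    sympl (Sfun s x) Q = ∑ i, x i * sympl (s i) Q := by
  rw [Sfun, sympl_sum_left, Finset.sum_filter]
  refine Finset.sum_congr rfl (fun i _ => ?_)
  rcases zmod2_cases (x i) with h | h <;> simp [h]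

lemma add_self_V {m : ℕ} (a : V m) : a + a = 0 := by
  funext i
  show a i + a i = 0
  apply Prod.ext <;> simp [Prod.fst_add, Prod.snd_add] <;>
    exact CharTwo.add_self_eq_zero _

/-- Character sum: if `c ≠ 0` then `Σ_k (-1)^{k·c} = 0`. -/
lemma char_sum {n : ℕ} (c : Fin n → ZMod 2) (i0 : Fin n) (h : c i0 = 1) :
    ∑ k : Fin n → ZMod 2, sgn (∑ i, k i * c i) = 0 := by
  classical
  set f : (Fin n → ZMod 2) → ℝ := fun k => sgn (∑ i, k i * c i) with hf
  set δ : Fin n → ZMod 2 := Pi.single i0 1 with hδ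
  have hdot : ∑ i, δ i * c i = 1 := by
    rw [Finset.sum_eq_single i0]
    · simp [hδ, h]
    · intro i _ hi; simp [hδ, Pi.single_apply, hi]
    · intro hi; exact absurd (Finset.mem_univ i0) hi
  have key : ∀ k, f (k + δ) = - f k := by
    intro k
    have : ∑ i, (k + δ) i * c i = (∑ i, k i * c i) + 1 := by
      rw [← hdot, ← Finset.sum_add_distrib]
      exact Finset.sum_congr rfl (fun i _ => by simp [Pi.add_apply]; ring)
    rw [hf]
    simp only [this, sgn_add, sgn_one]
    ring
  have hsum : ∑ k : Fin n → ZMod 2, f (k + δ) = ∑ k : Fin n → ZMod 2, f k :=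
    Fintype.sum_equiv (Equiv.addRight δ) _ f (fun k => rfl)
  have h2 : ∑ k : Fin n → ZMod 2, f (k + δ) = - ∑ k : Fin n → ZMod 2, f k := by
    rw [← Finset.sum_neg_distrib]
    exact Finset.sum_congr rfl (fun k _ => key k)
  have : ∑ k : Fin n → ZMod 2, f k = - ∑ k : Fin n → ZMod 2, f k := hsum ▸ h2
  linarith [this]

/-- Proposition 2 of the paper (syndrome measurements), as a cycle-space membership:
for `P` commuting with all stabilizers, the 1-chain
`Σ_{x,y,k,Q} (-1)^{⟨S(k)P,Q⟩} e^Q_{x,y}` has zero boundary. -/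
theorem stmt_7 (n m : ℕ) (s : Fin n → V m)
    (hs : ∀ i j, sympl (s i) (s j) = 0)
    (g : V (m + n) → V (m + n))
    (hg : ∀ (x : Fin n → ZMod 2) (Q : V m), (∀ i, sympl (s i) Q = 0) →
      g (emb Q x) = emb (Q + Sfun s x) x)
    (P : V m) (hP : ∀ i, sympl (s i) P = 0) :
    ∑ x : Fin n → ZMod 2, ∑ y : Fin n → ZMod 2, ∑ k : Fin n → ZMod 2, ∑ Q : V m,
      sgn (sympl (Sfun s k + P) Q) •
        (Finsupp.single (pt (emb Q y)) (1 : ℝ) -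
          Finsupp.single (pt (g (emb Q x))) (1 : ℝ)) = 0 := by
  classical
  set comm : Finset (V m) := Finset.univ.filter (fun Q => ∀ i, sympl (s i) Q = 0)
    with hcomm
  set M : ℝ := (Fintype.card (Fin n → ZMod 2) : ℝ) with hM
  set G : (Fin n → ZMod 2) → ((Fin (m + n) → ZMod 2) →₀ ℝ) :=
    fun t => ∑ Q ∈ comm, sgn (sympl P Q) • Finsupp.single (pt (emb Q t)) (1 : ℝ)
    with hG
  -- the coefficient sum over k
  have hc : ∀ Q : V m,
      (∑ k : Fin n → ZMod 2, sgn (sympl (Sfun s k + P) Q)) =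
        if Q ∈ comm then M * sgn (sympl P Q) else 0 := by
    intro Q
    have hexp : ∀ k : Fin n → ZMod 2,
        sympl (Sfun s k + P) Q = (∑ i, k i * sympl (s i) Q) + sympl P Q := by
      intro k; rw [sympl_add_left, sympl_Sfun]
    by_cases hQ : Q ∈ comm
    · have h0 : ∀ i, sympl (s i) Q = 0 := (Finset.mem_filter.mp hQ).2
      have : ∀ k : Fin n → ZMod 2, sympl (Sfun s k + P) Q = sympl P Q := by
        intro k; rw [hexp]; simp [h0]
      simp only [this, Finset.sum_const, hQ, if_true, nsmul_eq_mul, hM]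
      simp
    · have : ∃ i0, sympl (s i0) Q = 1 := by
        by_contra hno
        push_neg at hno
        exact hQ (Finset.mem_filter.mpr ⟨Finset.mem_univ _, fun i => by
          rcases zmod2_cases (sympl (s i) Q) with h | h
          · exact h
          · exact absurd h (hno i)⟩)
      obtain ⟨i0, hi0⟩ := this
      rw [if_neg hQ]
      calc (∑ k : Fin n → ZMod 2, sgn (sympl (Sfun s k + P) Q))
          = ∑ k : Fin n → ZMod 2, sgn (∑ i, k i * sympl (s i) Q) * sgn (sympl P Q) := by
            exact Finset.sum_congr rfl (fun k _ => by rw [hexp, sgn_add])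
        _ = (∑ k : Fin n → ZMod 2, sgn (∑ i, k i * sympl (s i) Q)) * sgn (sympl P Q) := by
            rw [Finset.sum_mul]
        _ = 0 := by rw [char_sum _ i0 hi0, zero_mul]
  -- Sfun commutes with everything relevant
  have hScommS : ∀ (i : Fin n) (x : Fin n → ZMod 2), sympl (s i) (Sfun s x) = 0 := by
    intro i x
    rw [sympl_comm, sympl_Sfun]
    simp [hs]
  have hPS : ∀ x : Fin n → ZMod 2, sympl P (Sfun s x) = 0 := by
    intro x
    rw [sympl_comm, sympl_Sfun]
    simp [hP]
  have hG' : ∀ t, G t =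
      ∑ Q ∈ comm, sgn (sympl P Q) • Finsupp.single (pt (emb Q t)) (1 : ℝ) :=
    fun t => rfl
  -- reindexing Q ↦ Q + Sfun s x on comm
  have hreindex : ∀ x : Fin n → ZMod 2,
      (∑ Q ∈ comm, sgn (sympl P Q) •
        Finsupp.single (pt (emb (Q + Sfun s x) x)) (1 : ℝ)) = G x := by
    intro x
    rw [hG']
    have hmem : ∀ Q ∈ comm, Q + Sfun s x ∈ comm := by
      intro Q hQ
      refine Finset.mem_filter.mpr ⟨Finset.mem_univ _, fun i => ?_⟩
      rw [sympl_comm, sympl_add_left, sympl_comm Q, sympl_comm (Sfun s x)]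
      rw [(Finset.mem_filter.mp hQ).2 i, hScommS i x, add_zero]
    have hsgn : ∀ Q : V m, sympl P (Q + Sfun s x) = sympl P Q := by
      intro Q
      rw [sympl_comm, sympl_add_left, sympl_comm Q, sympl_comm (Sfun s x), hPS,
        add_zero]
    refine Finset.sum_nbij' (i := fun Q => Q + Sfun s x) (j := fun Q => Q + Sfun s x)
      hmem hmem ?_ ?_ ?_
    · intro Q _; show Q + Sfun s x + Sfun s x = Q
      rw [add_assoc, add_self_V, add_zero]
    · intro Q _; show Q + Sfun s x + Sfun s x = Q
      rw [add_assoc, add_self_V, add_zero]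
    · intro Q _; rw [hsgn]
  -- the inner (k,Q)-sum, for fixed x y
  have hinner : ∀ x y : Fin n → ZMod 2,
      (∑ k : Fin n → ZMod 2, ∑ Q : V m,
        sgn (sympl (Sfun s k + P) Q) •
          (Finsupp.single (pt (emb Q y)) (1 : ℝ) -
            Finsupp.single (pt (g (emb Q x))) (1 : ℝ))) = M • (G y - G x) := by
    intro x y
    rw [Finset.sum_comm]
    calc (∑ Q : V m, ∑ k : Fin n → ZMod 2,
          sgn (sympl (Sfun s k + P) Q) •
            (Finsupp.single (pt (emb Q y)) (1 : ℝ) -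
              Finsupp.single (pt (g (emb Q x))) (1 : ℝ)))
        = ∑ Q : V m, (if Q ∈ comm then
            (M * sgn (sympl P Q)) •
              (Finsupp.single (pt (emb Q y)) (1 : ℝ) -
                Finsupp.single (pt (g (emb Q x))) (1 : ℝ)) else 0) := by
          refine Finset.sum_congr rfl (fun Q _ => ?_)
          rw [← Finset.sum_smul, hc Q, ite_smul, zero_smul]
      _ = ∑ Q ∈ Finset.univ ∩ comm,
            (M * sgn (sympl P Q)) •
              (Finsupp.single (pt (emb Q y)) (1 : ℝ) -
                Finsupp.single (pt (g (emb Q x))) (1 : ℝ)) := by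
          rw [Finset.sum_ite_mem]
      _ = ∑ Q ∈ comm,
            M • (sgn (sympl P Q) • Finsupp.single (pt (emb Q y)) (1 : ℝ) -
              sgn (sympl P Q) •
                Finsupp.single (pt (emb (Q + Sfun s x) x)) (1 : ℝ)) := by
          rw [Finset.univ_inter]
          refine Finset.sum_congr rfl (fun Q hQ => ?_)
          rw [hg x Q (Finset.mem_filter.mp hQ).2, mul_smul, smul_sub]
      _ = M • (G y - G x) := by
          rw [← Finset.smul_sum, Finset.sum_sub_distrib, ← hG' y, hreindex x]
  calc (∑ x : Fin n → ZMod 2, ∑ y : Fin n → ZMod 2, ∑ k : Fin n → ZMod 2, ∑ Q : V m,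
      sgn (sympl (Sfun s k + P) Q) •
        (Finsupp.single (pt (emb Q y)) (1 : ℝ) -
          Finsupp.single (pt (g (emb Q x))) (1 : ℝ)))
      = ∑ x : Fin n → ZMod 2, ∑ y : Fin n → ZMod 2, M • (G y - G x) := by
        exact Finset.sum_congr rfl (fun x _ =>
          Finset.sum_congr rfl (fun y _ => hinner x y))
    _ = M • (∑ x : Fin n → ZMod 2, ∑ y : Fin n → ZMod 2, (G y - G x)) := by
        rw [Finset.smul_sum]
        exact Finset.sum_congr rfl (fun x _ => by rw [Finset.smul_sum])
    _ = 0 := by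
        have : (∑ x : Fin n → ZMod 2, ∑ y : Fin n → ZMod 2, (G y - G x)) = 0 := by
          simp only [Finset.sum_sub_distrib]
          rw [Finset.sum_comm (f := fun _ x => G x)]
          exact sub_self _
        rw [this, smul_zero]
end
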